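/- Let q ≥ 1, let Ω and W be symmetric positive definite q×q real matrices, and let d ∈ ℝ^q with d ≠ 0. Then (dᵀ W Ω W d)/(dᵀ W d)² ≥ 1/(dᵀ Ω^{-1} d), and equality holds when W = Ω^{-1}. -/

import Mathlib

open Matrix

lemma mulVec_dot_left {q : ℕ} (M : Matrix (Fin q) (Fin q) ℝ) (x y : Fin q → ℝ) :
    (M.mulVec x) ⬝ᵥ y = x ⬝ᵥ Mᵀ.mulVec y := by
  rw [dotProduct_comm, dotProduct_mulVec, ← Matrix.mulVec_transpose, dotProduct_comm]

lemma symm_dot_comm {q : ℕ} (M : Matrix (Fin q) (Fin q) ℝ) (hM : M.IsSymm)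
    (x y : Fin q → ℝ) : x ⬝ᵥ M.mulVec y = y ⬝ᵥ M.mulVec x := by
  rw [dotProduct_comm, mulVec_dot_left, hM]

/-- Efficiency bound for GMM-type two-sample IV estimators: for
symmetric positive definite `Ω, W` and `d ≠ 0`,
`(dᵀWΩWd)/(dᵀWd)² ≥ 1/(dᵀΩ⁻¹d)`, with equality when `W = Ω⁻¹`. -/
theorem sandwich_variance_efficiency_bound
    (q : ℕ) (hq : 1 ≤ q)
    (Ω W : Matrix (Fin q) (Fin q) ℝ)
    (hΩsymm : Ω.IsSymm) (hΩpd : Ω.PosDef)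
    (hWsymm : W.IsSymm) (hWpd : W.PosDef)
    (d : Fin q → ℝ) (hd : d ≠ 0) :
    (d ⬝ᵥ (W * Ω * W).mulVec d) / (d ⬝ᵥ W.mulVec d) ^ 2 ≥
      1 / (d ⬝ᵥ Ω⁻¹.mulVec d) ∧
    (d ⬝ᵥ (Ω⁻¹ * Ω * Ω⁻¹).mulVec d) / (d ⬝ᵥ Ω⁻¹.mulVec d) ^ 2 =
      1 / (d ⬝ᵥ Ω⁻¹.mulVec d) := by
  have hdet : IsUnit Ω.det := isUnit_iff_ne_zero.mpr hΩpd.det_pos.ne'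
  have hinv : Ω * Ω⁻¹ = 1 := Matrix.mul_nonsing_inv Ω hdet
  have hinv' : Ω⁻¹ * Ω = 1 := Matrix.nonsing_inv_mul Ω hdet
  set A : ℝ := d ⬝ᵥ (W * Ω * W).mulVec d with hA
  set B : ℝ := d ⬝ᵥ W.mulVec d with hB
  set C : ℝ := d ⬝ᵥ Ω⁻¹.mulVec d with hC
  have hBpos : 0 < B := by
    have := hWpd.dotProduct_mulVec_pos hd; simpa using this
  have hCpos : 0 < C := by
    have := (hΩpd.inv).dotProduct_mulVec_pos hd; simpa using this
  set f : Fin q → ℝ := W.mulVec d with hf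
  set e : Fin q → ℝ := Ω⁻¹.mulVec d with he
  have hΩe : Ω.mulVec e = d := by
    rw [he, Matrix.mulVec_mulVec, hinv, Matrix.one_mulVec]
  -- key quadratic form identities
  have hfΩf : f ⬝ᵥ Ω.mulVec f = A := by
    rw [hf, Matrix.mulVec_mulVec, mulVec_dot_left, hWsymm,
      Matrix.mulVec_mulVec, ← Matrix.mul_assoc]
  have hfΩe : f ⬝ᵥ Ω.mulVec e = B := by
    rw [hΩe, hf, dotProduct_comm, hB]
  have heΩf : e ⬝ᵥ Ω.mulVec f = B := by
    rw [symm_dot_comm Ω hΩsymm, hfΩe]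
  have heΩe : e ⬝ᵥ Ω.mulVec e = C := by
    rw [hΩe, he, dotProduct_comm, hC]
  -- Cauchy–Schwarz via nonnegativity of the quadratic form at f - (B/C) • e
  have key : B ^ 2 ≤ A * C := by
    set t : ℝ := B / C with ht
    have hnn : 0 ≤ (f - t • e) ⬝ᵥ Ω.mulVec (f - t • e) := by
      have := hΩpd.posSemidef.dotProduct_mulVec_nonneg (f - t • e); simpa using this
    have hexp : (f - t • e) ⬝ᵥ Ω.mulVec (f - t • e)
        = A - 2 * t * B + t ^ 2 * C := by
      rw [Matrix.mulVec_sub, Matrix.mulVec_smul]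
      simp only [sub_dotProduct, dotProduct_sub, smul_dotProduct,
        dotProduct_smul, smul_eq_mul]
      rw [hfΩf, hfΩe, heΩf, heΩe]
      ring
    rw [hexp, ht] at hnn
    have hC' : C ≠ 0 := ne_of_gt hCpos
    have e1 : A - 2 * (B / C) * B + (B / C) ^ 2 * C = A - B ^ 2 / C := by
      field_simp; ring
    rw [e1, sub_nonneg] at hnn
    exact (div_le_iff₀ hCpos).mp hnn
  constructor
  · rw [ge_iff_le, div_le_div_iff₀ hCpos (by positivity)]
    nlinarith [key]
  · have h1 : Ω⁻¹ * Ω * Ω⁻¹ = Ω⁻¹ := by rw [hinv', Matrix.one_mul]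
    rw [h1, ← hC]
    rw [sq]
    field_simp
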